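/- arXiv:0902.3483 — 2 statements merged into one kernel-verified Lean document; each statement's English description precedes it below -/
import Mathlib

section
/- Let K be a bounded subset of a Banach space X and let L be a closed linear subspace of X that does not contain K. Set K₀ = K ∩ L. Then there exists a constant C with 0 < C < ∞ such that d_n(K₀) ≤ C · d_{n+1}(K) for all n ∈ ℕ ∪ {0}. -/
open Filter Topology Metric
open scoped ENNReal NNReal

/-- The Kolmogorov `n`-width of a set `K`: the infimum over all `n`-dimensional linear
subspaces `V` of `sup_{x ∈ K} dist(x, V)` (valued in `ℝ≥0∞` to avoid junk values). -/
noncomputable def kolWidth {X : Type*} [NormedAddCommGroup X] [NormedSpace ℝ X]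
    (K : Set X) (n : ℕ) : ℝ≥0∞ :=
  ⨅ (V : Submodule ℝ X) (_ : FiniteDimensional ℝ V ∧ Module.finrank ℝ V = n),
    ⨆ x ∈ K, EMetric.infEdist x (V : Set X)

/-- A sequence is lacunary if `liminf aₙ₊₁/aₙ = 0`. -/
def Lacunary (a : ℕ → ℝ≥0∞) : Prop :=
  Filter.liminf (fun n => a (n + 1) / a n) Filter.atTop = 0

set_option maxHeartbeats 1000000 in
/-- If `K` is bounded and `L` is a closed subspace not containing `K`, then the widths of
`K₀ = K ∩ L` satisfy `dₙ(K₀) ≤ C · dₙ₊₁(K)` for some constant `0 < C < ∞`. -/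
theorem kolWidth_inter_closed_subspace_le
    {X : Type*} [NormedAddCommGroup X] [NormedSpace ℝ X] [CompleteSpace X]
    (K : Set X) (hK : Bornology.IsBounded K)
    (L : Submodule ℝ X) (hLclosed : IsClosed (L : Set X)) (hKL : ¬ K ⊆ (L : Set X)) :
    ∃ C : ℝ≥0, 0 < C ∧
      ∀ n : ℕ, kolWidth (K ∩ (L : Set X)) n ≤ (C : ℝ≥0∞) * kolWidth K (n + 1) := by
  obtain ⟨x₀, hx₀K, hx₀L⟩ := Set.not_subset.mp hKL
  obtain ⟨f, u, hfL, hfu⟩ := geometric_hahn_banach_closed_point L.convex hLclosed hx₀L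
  have hu : 0 < u := by simpa using hfL 0 L.zero_mem
  have hf0 : ∀ z ∈ L, f z = 0 := by
    intro z hz
    by_contra h
    have h2 : f ((2 * u / f z) • z) < u := hfL _ (L.smul_mem _ hz)
    rw [map_smul, smul_eq_mul, div_mul_cancel₀ _ h] at h2
    linarith
  obtain ⟨a, ha_def⟩ : ∃ a : ℝ, a = f x₀ := ⟨_, rfl⟩
  rw [← ha_def] at hfu
  have ha : 0 < a := lt_trans hu hfu
  have hfne : f ≠ 0 := by
    intro h
    rw [ha_def, h] at ha
    simp at ha
  have hb : 0 < ‖f‖ := norm_pos_iff.mpr hfne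
  obtain ⟨b, hb_def⟩ : ∃ b : ℝ, b = ‖f‖ := ⟨_, rfl⟩
  rw [← hb_def] at hb
  obtain ⟨R, hR⟩ := hK.subset_closedBall 0
  have hRx : ∀ x ∈ K, ‖x‖ ≤ R := fun x hx => mem_closedBall_zero_iff.mp (hR hx)
  have hR0 : 0 ≤ R := le_trans (norm_nonneg x₀) (hRx x₀ hx₀K)
  obtain ⟨t, ht_def⟩ : ∃ t : ℝ, t = a / (2 * b) := ⟨_, rfl⟩
  have ht : 0 < t := by rw [ht_def]; positivity
  have hbt1 : (2 * b / a) * t = 1 := by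
    rw [ht_def]; field_simp
  have hbt2 : b * t = a / 2 := by
    rw [ht_def]; field_simp
  obtain ⟨c, hc_def⟩ : ∃ c : ℝ, c = 1 + (2 * b / a) * (2 * R + t) := ⟨_, rfl⟩
  have hcoef : 0 ≤ (2 * b / a) := by positivity
  have hc1 : 1 ≤ c := by
    have := mul_nonneg hcoef (by linarith : (0:ℝ) ≤ 2 * R + t)
    linarith
  have hc0 : 0 < c := lt_of_lt_of_le one_pos hc1
  refine ⟨c.toNNReal, Real.toNNReal_pos.mpr hc0, fun n => ?_⟩
  have hCne0 : (c.toNNReal : ℝ≥0∞) ≠ 0 := by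
    simp [Real.toNNReal_pos.mpr hc0, (Real.toNNReal_pos.mpr hc0).ne']
  have hCnetop : (c.toNNReal : ℝ≥0∞) ≠ ⊤ := ENNReal.coe_ne_top
  have hmain : ∀ V : Submodule ℝ X, FiniteDimensional ℝ V → Module.finrank ℝ V = n + 1 →
      kolWidth (K ∩ (L : Set X)) n ≤
        (c.toNNReal : ℝ≥0∞) * (⨆ x ∈ K, EMetric.infEdist x (V : Set X)) := by
    intro V hFD hrank
    haveI := hFD
    set S := ⨆ x ∈ K, EMetric.infEdist x (V : Set X) with hS_def
    by_cases hStop : S = ⊤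
    · rw [hStop, ENNReal.mul_top hCne0]; exact le_top
    set ε := S.toReal with hε_def
    have hε0 : 0 ≤ ε := ENNReal.toReal_nonneg
    have hdist : ∀ x ∈ K, Metric.infDist x (V : Set X) ≤ ε := by
      intro x hx
      have h1 : EMetric.infEdist x (V : Set X) ≤ S :=
        le_iSup₂ (f := fun x (_ : x ∈ K) => EMetric.infEdist x (V : Set X)) x hx
      exact ENNReal.toReal_mono hStop h1
    have hVne : (V : Set X).Nonempty := ⟨0, V.zero_mem⟩
    have key : ∃ W : Submodule ℝ X, FiniteDimensional ℝ W ∧ Module.finrank ℝ W = n ∧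
        ∀ x ∈ K ∩ (L : Set X), Metric.infDist x (W : Set X) ≤ c * ε := by
      rcases le_or_gt t ε with hcase | hcase
      · -- Case A : ε is large; any n-dimensional subspace will do
        obtain ⟨g, hg⟩ := exists_linearIndependent_of_le_finrank
          (R := ℝ) (M := V) (n := n) (by rw [hrank]; omega)
        have hg' : LinearIndependent ℝ (V.subtype ∘ g) :=
          hg.map' V.subtype (Submodule.ker_subtype V)
        refine ⟨Submodule.span ℝ (Set.range (V.subtype ∘ g)),
          FiniteDimensional.span_of_finite ℝ (Set.finite_range _), ?_, ?_⟩
        · rw [finrank_span_eq_card hg']; simp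
        · intro x hx
          have h1 : Metric.infDist x (Submodule.span ℝ (Set.range (V.subtype ∘ g)) : Set X)
              ≤ dist x 0 := Metric.infDist_le_dist_of_mem (Submodule.zero_mem _)
          rw [dist_zero_right] at h1
          have h2 : ‖x‖ ≤ R := hRx x hx.1
          have hctge : c * t ≤ c * ε := mul_le_mul_of_nonneg_left hcase hc0.le
          have h5 : (2 * b / a) * (2 * R + t) * t = 2 * R + t := by
            rw [show (2 * b / a) * (2 * R + t) * t = ((2 * b / a) * t) * (2 * R + t) from by
              ring, hbt1, one_mul]
          have h4 : c * t = t + (2 * R + t) := by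
            calc c * t = t + (2 * b / a) * (2 * R + t) * t := by rw [hc_def]; ring
            _ = t + (2 * R + t) := by rw [h5]
          linarith
      · -- Case B : ε < t
        have h0 : Metric.infDist x₀ (V : Set X) < t := lt_of_le_of_lt (hdist x₀ hx₀K) hcase
        obtain ⟨v₀, hv₀V, hv₀d⟩ := (Metric.infDist_lt_iff hVne).mp h0
        have habs : ∀ y z : X, f z = 0 → |f y| ≤ b * dist y z := by
          intro y z hz
          have h1 := f.le_opNorm (y - z)
          rw [map_sub, hz, sub_zero, Real.norm_eq_abs, ← dist_eq_norm, ← hb_def] at h1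
          exact h1
        have hfv₀ : a / 2 ≤ f v₀ := by
          have h1' : |f x₀ - f v₀| ≤ b * dist x₀ v₀ := by
            have h2 := f.le_opNorm (x₀ - v₀)
            rw [map_sub, Real.norm_eq_abs, ← dist_eq_norm, ← hb_def] at h2
            exact h2
          have h2 : f x₀ - f v₀ ≤ b * dist x₀ v₀ := le_trans (le_abs_self _) h1'
          have h3 : b * dist x₀ v₀ ≤ b * t := mul_le_mul_of_nonneg_left hv₀d.le hb.le
          rw [← ha_def] at h2
          linarith
        have hv₀pos : 0 < f v₀ := lt_of_lt_of_le (by linarith) hfv₀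
        have hv₀norm : ‖v₀‖ ≤ R + t := by
          have h1 : ‖v₀‖ - ‖x₀‖ ≤ ‖v₀ - x₀‖ := norm_sub_norm_le v₀ x₀
          have h2 : ‖v₀ - x₀‖ = dist x₀ v₀ := by rw [← dist_eq_norm, dist_comm]
          have h3 : ‖x₀‖ ≤ R := hRx x₀ hx₀K
          linarith [hv₀d.le, h1.trans_eq h2]
        set g : V →ₗ[ℝ] ℝ := (f : X →ₗ[ℝ] ℝ).domRestrict V with hg_def
        have hgsurj : Function.Surjective g := by
          intro r
          refine ⟨(r / f v₀) • ⟨v₀, hv₀V⟩, ?_⟩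
          simp only [hg_def, map_smul, LinearMap.domRestrict_apply, smul_eq_mul]
          exact div_mul_cancel₀ r hv₀pos.ne'
        have hkerrank : Module.finrank ℝ (LinearMap.ker g) = n := by
          have h5 := g.finrank_range_add_finrank_ker
          rw [LinearMap.range_eq_top.mpr hgsurj, finrank_top, hrank,
            Module.finrank_self] at h5
          omega
        set W := (LinearMap.ker g).map V.subtype with hW_def
        have hWFD : FiniteDimensional ℝ W := by
          haveI : FiniteDimensional ℝ (LinearMap.ker g) := inferInstance
          exact Module.Finite.map _ _
        have hWrank : Module.finrank ℝ W = n := by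
          rw [← hkerrank]
          exact (Submodule.equivMapOfInjective V.subtype
            (Submodule.injective_subtype V) (LinearMap.ker g)).finrank_eq.symm
        have hmemW : ∀ y, y ∈ V → f y = 0 → y ∈ W := by
          intro y hyV hfy
          exact Submodule.mem_map.mpr ⟨⟨y, hyV⟩, LinearMap.mem_ker.mpr (by
            simp only [hg_def, LinearMap.domRestrict_apply]; exact hfy), rfl⟩
        refine ⟨W, hWFD, hWrank, ?_⟩
        intro x hx
        have hfx : f x = 0 := hf0 x hx.2
        refine le_of_forall_pos_le_add fun η hη => ?_
        have hηc : 0 < η / c := by positivity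
        have hd : Metric.infDist x (V : Set X) < ε + η / c :=
          lt_of_le_of_lt (hdist x hx.1) (by linarith)
        obtain ⟨v, hvV, hvd⟩ := (Metric.infDist_lt_iff hVne).mp hd
        set w := v - (f v / f v₀) • v₀ with hw_def
        have hwV : w ∈ V := V.sub_mem hvV (V.smul_mem _ hv₀V)
        have hfw : f w = 0 := by
          simp only [hw_def, map_sub, map_smul, smul_eq_mul]
          rw [div_mul_cancel₀ _ hv₀pos.ne', sub_self]
        have hwW : w ∈ W := hmemW w hwV hfw
        have h6 : Metric.infDist x (W : Set X) ≤ dist x w :=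
          Metric.infDist_le_dist_of_mem hwW
        have h7 : dist x w ≤ dist x v + (|f v| / f v₀) * ‖v₀‖ := by
          rw [dist_eq_norm, hw_def,
            show x - (v - (f v / f v₀) • v₀) = (x - v) + (f v / f v₀) • v₀ from by abel]
          refine (norm_add_le _ _).trans ?_
          rw [norm_smul, Real.norm_eq_abs, abs_div, abs_of_pos hv₀pos, ← dist_eq_norm]
        have hfv : |f v| ≤ b * dist x v := by
          have h1 := habs v x hfx
          rwa [dist_comm] at h1
        set d := dist x v with hd_def
        have hd0 : 0 ≤ d := dist_nonneg
        have h8 : (|f v| / f v₀) * ‖v₀‖ ≤ (b * d / (a / 2)) * (R + t) := by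
          have h9 : |f v| / f v₀ ≤ b * d / (a / 2) :=
            div_le_div₀ (by positivity) hfv (by linarith) hfv₀
          exact mul_le_mul h9 hv₀norm (norm_nonneg _) (by positivity)
        have h10 : (b * d / (a / 2)) * (R + t) = (2 * b / a) * (R + t) * d := by
          field_simp
        have h11 : (2 * b / a) * (R + t) * d ≤ (2 * b / a) * (2 * R + t) * d := by
          have : (2 * b / a) * (R + t) ≤ (2 * b / a) * (2 * R + t) := by nlinarith
          exact mul_le_mul_of_nonneg_right this hd0
        have h12 : d + (2 * b / a) * (2 * R + t) * d = c * d := by rw [hc_def]; ring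
        have h13 : c * d ≤ c * (ε + η / c) := mul_le_mul_of_nonneg_left hvd.le hc0.le
        have h14 : c * (ε + η / c) = c * ε + η := by field_simp
        linarith
    obtain ⟨W, hWFD, hWrank, hWbound⟩ := key
    calc kolWidth (K ∩ (L : Set X)) n
        ≤ ⨆ x ∈ K ∩ (L : Set X), EMetric.infEdist x (W : Set X) :=
          iInf₂_le W ⟨hWFD, hWrank⟩
      _ ≤ ENNReal.ofReal (c * ε) := by
          refine iSup₂_le fun x hx => ?_
          have hne : EMetric.infEdist x (W : Set X) ≠ ⊤ :=
            Metric.infEdist_ne_top ⟨0, W.zero_mem⟩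
          rw [← ENNReal.ofReal_toReal hne]
          exact ENNReal.ofReal_le_ofReal (hWbound x hx)
      _ = (c.toNNReal : ℝ≥0∞) * S := by
          rw [ENNReal.ofReal_mul hc0.le, hε_def, ENNReal.ofReal_toReal hStop]
          rfl
  have hdiv : kolWidth (K ∩ (L : Set X)) n / (c.toNNReal : ℝ≥0∞) ≤ kolWidth K (n + 1) := by
    conv_rhs => rw [kolWidth]
    refine le_iInf fun V => le_iInf fun hV => ?_
    exact ENNReal.div_le_of_le_mul' (hmain V hV.1 hV.2)
  calc kolWidth (K ∩ (L : Set X)) n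
      = (c.toNNReal : ℝ≥0∞) * (kolWidth (K ∩ (L : Set X)) n / (c.toNNReal : ℝ≥0∞)) :=
        (ENNReal.mul_div_cancel hCne0 hCnetop).symm
    _ ≤ (c.toNNReal : ℝ≥0∞) * kolWidth K (n + 1) := mul_le_mul_right hdiv _
end

section
/- Let K be a compact subset of a Banach space X whose linear span is infinite-dimensional. If the sequence of Kolmogorov widths (d_n(K))_{n≥0} is lacunary, then every bounded linear operator T on X with TK ⊇ K leaves the closed linear span V_K of K invariant; that is, G(K) ⊆ A_K. -/
open Filter Topology Metric
open scoped ENNReal NNReal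

section Helpers

variable {X : Type*} [NormedAddCommGroup X] [NormedSpace ℝ X]

lemma my_exists_superspace (hX : ¬ FiniteDimensional ℝ X) (W : Submodule ℝ X)
    (hW : FiniteDimensional ℝ W) :
    ∀ n : ℕ, Module.finrank ℝ W ≤ n →
      ∃ W' : Submodule ℝ X, W ≤ W' ∧ FiniteDimensional ℝ W' ∧ Module.finrank ℝ W' = n := by
  intro n
  induction n with
  | zero => intro h; exact ⟨W, le_rfl, hW, le_antisymm h (Nat.zero_le _)⟩
  | succ n ih =>
    intro h
    rcases eq_or_lt_of_le h with heq | hlt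
    · exact ⟨W, le_rfl, hW, heq⟩
    obtain ⟨W', hWW', hW'fd, hW'rk⟩ := ih (Nat.lt_succ_iff.mp hlt)
    haveI := hW'fd
    have hne : W' ≠ ⊤ := by
      rintro rfl
      exact hX ((Submodule.topEquiv (R := ℝ) (M := X)).finiteDimensional)
    obtain ⟨v, hv⟩ : ∃ v : X, v ∉ W' := by
      by_contra hc
      push_neg at hc
      exact hne (Submodule.eq_top_iff'.2 hc)
    have hv0 : v ≠ 0 := fun h0 => hv (h0 ▸ W'.zero_mem)
    refine ⟨W' ⊔ (ℝ ∙ v), le_trans hWW' le_sup_left, inferInstance, ?_⟩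
    have hdisj : W' ⊓ (ℝ ∙ v) = ⊥ :=
      ((Submodule.disjoint_span_singleton' hv0).2 hv).eq_bot
    have := Submodule.finrank_sup_add_finrank_inf_eq W' (ℝ ∙ v)
    rw [hdisj, finrank_bot, add_zero, finrank_span_singleton hv0, hW'rk] at this
    exact this

lemma my_kolWidth_le (hX : ¬ FiniteDimensional ℝ X) {K : Set X} {n : ℕ}
    (W : Submodule ℝ X) (hWfd : FiniteDimensional ℝ W) (hWrk : Module.finrank ℝ W ≤ n)
    {b : ℝ≥0∞} (hb : ∀ x ∈ K, EMetric.infEdist x (W : Set X) ≤ b) :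
    kolWidth K n ≤ b := by
  obtain ⟨W', hWW', hfd, hrk⟩ := my_exists_superspace hX W hWfd n hWrk
  refine le_trans (iInf₂_le W' ⟨hfd, hrk⟩) ?_
  refine iSup₂_le fun x hx => le_trans ?_ (hb x hx)
  exact EMetric.infEdist_anti hWW'

lemma my_width_ne_top (hX : ¬ FiniteDimensional ℝ X) {K : Set X} (hK : IsCompact K) (n : ℕ) :
    kolWidth K n ≠ ⊤ := by
  obtain ⟨R, hR⟩ := (hK.isBounded).exists_norm_le
  have : kolWidth K n ≤ ENNReal.ofReal R := by
    refine my_kolWidth_le hX (⊥ : Submodule ℝ X) inferInstance (by simp) ?_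
    intro x hx
    refine le_trans (EMetric.infEdist_le_edist_of_mem (y := 0) (Submodule.zero_mem _)) ?_
    rw [edist_dist, dist_zero_right]
    exact ENNReal.ofReal_le_ofReal (hR x hx)
  exact (lt_of_le_of_lt this ENNReal.ofReal_lt_top).ne

lemma my_width_small (hX : ¬ FiniteDimensional ℝ X) {K : Set X} (hK : IsCompact K)
    {ε : ℝ} (hε : 0 < ε) :
    ∃ N : ℕ, ∀ n ≥ N, kolWidth K n ≤ ENNReal.ofReal ε := by
  obtain ⟨t, htf, htK⟩ := (Metric.totallyBounded_iff).1 hK.totallyBounded ε hε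
  haveI := FiniteDimensional.span_of_finite ℝ htf
  refine ⟨Module.finrank ℝ (Submodule.span ℝ t), fun n hn => ?_⟩
  refine my_kolWidth_le hX (Submodule.span ℝ t) inferInstance hn ?_
  intro x hx
  obtain ⟨y, hyt, hxy⟩ := Set.mem_iUnion₂.1 (htK hx)
  refine le_trans (EMetric.infEdist_le_edist_of_mem (Submodule.subset_span hyt)) ?_
  rw [edist_dist]
  exact ENNReal.ofReal_le_ofReal (le_of_lt (by exact hxy))

lemma my_width_ne_zero {K : Set X}
    (hinf : ¬ FiniteDimensional ℝ (Submodule.span ℝ K)) (n : ℕ) :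
    kolWidth K n ≠ 0 := by
  intro h0
  obtain ⟨s, hsK, hspan, hs⟩ := exists_linearIndependent ℝ K
  have hsinf : s.Infinite := by
    by_contra hfin
    rw [Set.not_infinite] at hfin
    exact hinf (hspan ▸ FiniteDimensional.span_of_finite ℝ hfin)
  haveI := hsinf.to_subtype
  let f : Fin (n + 1) ↪ s := Fin.valEmbedding.trans (Infinite.natEmbedding s)
  set x : Fin (n + 1) → X := fun i => ((f i : s) : X) with hxdef
  have hxK : ∀ i, x i ∈ K := fun i => hsK (f i).2
  have hli : LinearIndependent ℝ x := hs.comp f f.injective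
  have key : ∀ k : ℕ, ∃ a : Fin (n + 1) → ℝ, ‖a‖ = 1 ∧
      ‖∑ i, a i • x i‖ ≤ (n + 1) * (1 / (k + 1)) := by
    intro k
    have hεpos : (0 : ℝ≥0∞) < ENNReal.ofReal (1 / (k + 1)) := by
      rw [ENNReal.ofReal_pos]; positivity
    have hlt : kolWidth K n < ENNReal.ofReal (1 / (k + 1)) := h0 ▸ hεpos
    rw [kolWidth, iInf_lt_iff] at hlt
    obtain ⟨V, hlt⟩ := hlt
    rw [iInf_lt_iff] at hlt
    obtain ⟨⟨hVfd, hVrk⟩, hsup⟩ := hlt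
    have hyex : ∀ i, ∃ y ∈ (V : Set X), dist (x i) y < 1 / (k + 1) := by
      intro i
      have : EMetric.infEdist (x i) (V : Set X) < ENNReal.ofReal (1 / (k + 1)) :=
        lt_of_le_of_lt (le_iSup₂ (f := fun z (_ : z ∈ K) =>
          EMetric.infEdist z (V : Set X)) (x i) (hxK i)) hsup
      obtain ⟨y, hyV, hy⟩ := EMetric.infEdist_lt_iff.1 this
      exact ⟨y, hyV, by rwa [edist_dist, ENNReal.ofReal_lt_ofReal_iff (by positivity)] at hy⟩
    choose y hyV hyd using hyex
    have hdep : ¬ LinearIndependent ℝ y := by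
      intro h
      have h1 : Module.finrank ℝ (Submodule.span ℝ (Set.range y)) = n + 1 := by
        rw [finrank_span_eq_card h, Fintype.card_fin]
      haveI := hVfd
      have h2 : Submodule.span ℝ (Set.range y) ≤ V :=
        Submodule.span_le.2 (Set.range_subset_iff.2 hyV)
      have := Submodule.finrank_mono h2
      omega
    obtain ⟨g, hg0, i0, hgi0⟩ := Fintype.not_linearIndependent_iff.1 hdep
    have hgne : g ≠ 0 := fun h => hgi0 (by rw [h]; rfl)
    have hm : ‖g‖ ≠ 0 := norm_ne_zero_iff.2 hgne
    refine ⟨‖g‖⁻¹ • g, ?_, ?_⟩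
    · rw [norm_smul, norm_inv, norm_norm, inv_mul_cancel₀ hm]
    · have hsum0 : ∑ i, (‖g‖⁻¹ • g) i • y i = 0 := by
        simp only [Pi.smul_apply, smul_eq_mul, mul_smul, ← Finset.smul_sum, hg0, smul_zero]
      have heq : ∑ i, (‖g‖⁻¹ • g) i • x i = ∑ i, (‖g‖⁻¹ • g) i • (x i - y i) := by
        simp only [smul_sub, Finset.sum_sub_distrib, hsum0, sub_zero]
      rw [heq]
      refine le_trans (norm_sum_le _ _) ?_
      have hcard : ((Finset.univ : Finset (Fin (n + 1))).card : ℝ) = n + 1 := by simp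
      calc ∑ i, ‖(‖g‖⁻¹ • g) i • (x i - y i)‖
          ≤ ∑ _i : Fin (n + 1), 1 * (1 / (k + 1) : ℝ) := by
            refine Finset.sum_le_sum fun i _ => ?_
            rw [norm_smul]
            refine mul_le_mul ?_ ?_ (norm_nonneg _) one_pos.le
            · exact le_trans (norm_le_pi_norm (‖g‖⁻¹ • g) i) (by
                rw [norm_smul, norm_inv, norm_norm, inv_mul_cancel₀ hm])
            · rw [← dist_eq_norm]; exact (hyd i).le
        _ = (n + 1) * (1 / (k + 1)) := by
            rw [Finset.sum_const, nsmul_eq_mul, hcard, one_mul]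
  choose a ha1 ha2 using key
  have hmem : ∀ k, a k ∈ Metric.sphere (0 : Fin (n + 1) → ℝ) 1 := by
    intro k; rw [mem_sphere_zero_iff_norm]; exact ha1 k
  obtain ⟨aL, haL, φ, hφ, hconv⟩ := (isCompact_sphere (0 : Fin (n + 1) → ℝ) 1).tendsto_subseq hmem
  have hcont : Continuous fun c : Fin (n + 1) → ℝ => ∑ i, c i • x i :=
    continuous_finset_sum _ fun i _ => (continuous_apply i).smul continuous_const
  have h1 : Tendsto (fun k => ∑ i, a (φ k) i • x i) atTop (𝓝 (∑ i, aL i • x i)) :=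
    (hcont.tendsto aL).comp hconv
  have h2 : Tendsto (fun k => ∑ i, a (φ k) i • x i) atTop (𝓝 0) := by
    have hb : Tendsto (fun k : ℕ => ((n:ℝ)+1) * (1/((k:ℝ)+1))) atTop (𝓝 0) := by
      have := (tendsto_one_div_add_atTop_nhds_zero_nat).const_mul ((n : ℝ) + 1)
      simpa using this
    have hle : ∀ k : ℕ, ‖∑ i, a (φ k) i • x i‖ ≤ ((n:ℝ)+1) * (1/((k:ℝ)+1)) := by
      intro k
      refine le_trans (ha2 (φ k)) ?_
      have h1k : (1 : ℝ) / ((φ k : ℝ) + 1) ≤ 1 / ((k:ℝ) + 1) := by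
        apply one_div_le_one_div_of_le (by positivity)
        have hk : (k:ℝ) ≤ (φ k : ℝ) := by exact_mod_cast hφ.le_apply
        linarith
      have hn0 : (0:ℝ) ≤ (n + 1 : ℝ) := by positivity
      nlinarith
    exact squeeze_zero_norm hle hb
  have hzero : ∑ i, aL i • x i = 0 := tendsto_nhds_unique h1 h2
  have := Fintype.linearIndependent_iff.1 hli aL hzero
  have : aL = 0 := funext this
  rw [mem_sphere_zero_iff_norm, this, norm_zero] at haL
  exact one_ne_zero haL.symm

end Helpers

set_option maxHeartbeats 1000000 in
/-- If the widths of a compact `K` with infinite-dimensional span form a lacunary sequence,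
then every operator covering `K` leaves the closed linear span `V_K` invariant. -/
theorem covering_leaves_span_invariant_of_lacunary
    {X : Type*} [NormedAddCommGroup X] [NormedSpace ℝ X] [CompleteSpace X]
    (K : Set X) (hK : IsCompact K)
    (hinf : ¬ FiniteDimensional ℝ (Submodule.span ℝ K))
    (hlac : Lacunary (fun n => kolWidth K n))
    (T : X →L[ℝ] X) (hT : K ⊆ T '' K) :
    ∀ x ∈ (Submodule.span ℝ K).topologicalClosure,
      T x ∈ (Submodule.span ℝ K).topologicalClosure := by
  classical
  set V := (Submodule.span ℝ K).topologicalClosure with hVdef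
  have hVclosed : IsClosed (V : Set X) := Submodule.isClosed_topologicalClosure _
  haveI : IsClosed (V : Set X) := hVclosed
  have hX : ¬ FiniteDimensional ℝ X := by
    intro h
    exact hinf (FiniteDimensional.finiteDimensional_submodule _)
  have hKV : ∀ z ∈ K, z ∈ V := fun z hz =>
    (Submodule.le_topologicalClosure _) (Submodule.subset_span hz)
  suffices hTK : ∀ z ∈ K, T z ∈ V by
    intro x hx
    have hclosed : IsClosed ((Submodule.comap (T : X →ₗ[ℝ] X) V : Submodule ℝ X) : Set X) :=
      hVclosed.preimage T.continuous
    have hle : Submodule.span ℝ K ≤ Submodule.comap (T : X →ₗ[ℝ] X) V :=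
      Submodule.span_le.2 fun z hz => hTK z hz
    exact Submodule.topologicalClosure_minimal _ hle hclosed hx
  by_contra hcon
  push_neg at hcon
  obtain ⟨y0, hy0K, hy0⟩ := hcon
  have hVne : (V : Set X).Nonempty := ⟨0, V.zero_mem⟩
  set c := infDist (T y0) (V : Set X) with hcdef
  have hcpos : 0 < c := (hVclosed.notMem_iff_infDist_pos hVne).1 hy0
  set M := ‖T‖ + 1 with hMdef
  have hM1 : 1 ≤ M := by rw [hMdef]; linarith [norm_nonneg T]
  have hM0 : 0 < M := lt_of_lt_of_le one_pos hM1
  have hTle : ∀ u : X, ‖T u‖ ≤ M * ‖u‖ := fun u =>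
    le_trans (T.le_opNorm u) (by have := norm_nonneg u; nlinarith [norm_nonneg T])
  set B := M * (‖y0‖ + c) with hBdef
  have hB0 : 0 ≤ B := by have := norm_nonneg y0; positivity
  set C : ℝ := 3 * M + 6 * M * B / c with hCdef
  have hCpos : 0 < C := by positivity
  obtain ⟨N, hN⟩ := my_width_small hX hK (ε := c / (6 * M)) (by positivity)
  -- quotient norm lower bound helper
  have hnormmk : ∀ u : X, infDist u (V : Set X) ≤ ‖(Submodule.Quotient.mk u : X ⧸ V)‖ := by
    intro u
    refine le_of_forall_pos_le_add fun ε hε => ?_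
    obtain ⟨m, hm, hmlt⟩ := Submodule.Quotient.norm_mk_lt
      (Submodule.Quotient.mk u : X ⧸ V) hε
    have humV : u - m ∈ V := by
      rw [← neg_mem_iff]
      simpa [neg_sub] using (Submodule.Quotient.eq V).1 hm
    calc infDist u (V : Set X) ≤ dist u (u - m) := infDist_le_dist_of_mem humV
      _ = ‖m‖ := by rw [dist_eq_norm]; simp
      _ ≤ ‖(Submodule.Quotient.mk u : X ⧸ V)‖ + ε := hmlt.le
  -- key inequality
  have key : ∀ n, N ≤ n → kolWidth K n ≤ ENNReal.ofReal C * kolWidth K (n + 1) := by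
    intro n hn
    have hd1ne0 : kolWidth K (n + 1) ≠ 0 := my_width_ne_zero hinf (n + 1)
    have hd1netop : kolWidth K (n + 1) ≠ ⊤ := my_width_ne_top hX hK (n + 1)
    set δ := (kolWidth K (n + 1)).toReal with hδdef
    have hδpos : 0 < δ := ENNReal.toReal_pos hd1ne0 hd1netop
    have hδle : δ ≤ c / (6 * M) :=
      ENNReal.toReal_le_of_le_ofReal (by positivity) (hN (n + 1) (by omega))
    have hMδ : 2 * M * δ ≤ c / 3 := by
      have h6 : δ * (6 * M) ≤ c := (le_div_iff₀ (by positivity)).1 hδle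
      nlinarith
    have hlt : kolWidth K (n + 1) < ENNReal.ofReal (2 * δ) := by
      conv_lhs => rw [← ENNReal.ofReal_toReal hd1netop]
      exact ENNReal.ofReal_lt_ofReal_iff (by positivity) |>.2 (by linarith)
    rw [kolWidth, iInf_lt_iff] at hlt
    obtain ⟨W, hlt⟩ := hlt
    rw [iInf_lt_iff] at hlt
    obtain ⟨⟨hWfd, hWrk⟩, hWsup⟩ := hlt
    have hWj : ∀ z ∈ K, ∃ w ∈ (W : Set X), dist z w < 2 * δ := by
      intro z hz
      have : EMetric.infEdist z (W : Set X) < ENNReal.ofReal (2 * δ) :=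
        lt_of_le_of_lt (le_iSup₂ (f := fun u (_ : u ∈ K) =>
          EMetric.infEdist u (W : Set X)) z hz) hWsup
      obtain ⟨w, hwW, hw⟩ := EMetric.infEdist_lt_iff.1 this
      exact ⟨w, hwW, by rwa [edist_dist, ENNReal.ofReal_lt_ofReal_iff (by positivity)] at hw⟩
    obtain ⟨w0, hw0W, hw0⟩ := hWj y0 hy0K
    set z0 := T w0 with hz0def
    set W1 := W.map (T : X →ₗ[ℝ] X) with hW1def
    haveI : FiniteDimensional ℝ W1 := Module.Finite.map W (T : X →ₗ[ℝ] X)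
    have hz0W1 : z0 ∈ W1 := Submodule.mem_map_of_mem hw0W
    have hdTy0z0 : dist (T y0) z0 ≤ c / 3 := by
      rw [hz0def, dist_eq_norm, ← map_sub]
      refine le_trans (hTle _) ?_
      rw [← dist_eq_norm]
      nlinarith [hw0.le, dist_nonneg (x := y0) (y := w0)]
    have hz0far : 2 * c / 3 ≤ infDist z0 (V : Set X) := by
      have htri : infDist (T y0) (V : Set X) ≤ infDist z0 (V : Set X) + dist (T y0) z0 :=
        infDist_le_infDist_add_dist
      have h2 := htri
      rw [← hcdef] at h2
      linarith
    have hz0norm : ‖z0‖ ≤ B := by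
      have h1 : ‖w0‖ ≤ ‖y0‖ + 2 * δ := by
        have hd : ‖y0 - w0‖ ≤ 2 * δ := by rw [← dist_eq_norm]; exact hw0.le
        have habs := abs_le.1 (abs_norm_sub_norm_le y0 w0)
        linarith [habs.1, habs.2]
      have h2δc : 2 * δ ≤ c := by nlinarith
      refine le_trans (hTle w0) ?_
      rw [hBdef]
      nlinarith
    -- the functional
    have hz0mkne : (Submodule.Quotient.mk z0 : X ⧸ V) ≠ 0 := by
      intro h
      have : z0 ∈ V := (Submodule.Quotient.mk_eq_zero V).1 h
      have : infDist z0 (V : Set X) = 0 := infDist_zero_of_mem this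
      linarith
    obtain ⟨g, hg1, hgz0⟩ := exists_dual_vector ℝ (Submodule.Quotient.mk z0 : X ⧸ V) (norm_ne_zero_iff.2 hz0mkne)
    set lf : X →ₗ[ℝ] ℝ := (g.toLinearMap).comp V.mkQ with hlfdef
    have hlf : ∀ u : X, lf u = g (Submodule.Quotient.mk u) := fun u => rfl
    have hlfb : ∀ u : X, |lf u| ≤ ‖u‖ := by
      intro u
      rw [hlf]
      calc |g (Submodule.Quotient.mk u)| = ‖g (Submodule.Quotient.mk u)‖ := (Real.norm_eq_abs _).symm
        _ ≤ ‖g‖ * ‖(Submodule.Quotient.mk u : X ⧸ V)‖ := g.le_opNorm _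
        _ ≤ ‖u‖ := by rw [hg1, one_mul]; exact Submodule.Quotient.norm_mk_le V u
    have hlfK : ∀ z ∈ K, lf z = 0 := by
      intro z hz
      rw [hlf, (Submodule.Quotient.mk_eq_zero V).2 (hKV z hz), map_zero]
    have hlfz0 : c / 2 ≤ lf z0 := by
      rw [hlf]
      have : g (Submodule.Quotient.mk z0) = ‖(Submodule.Quotient.mk z0 : X ⧸ V)‖ := by
        simpa using hgz0
      rw [this]
      have := hnormmk z0
      linarith
    have hlfz0pos : lf z0 ≠ 0 := (lt_of_lt_of_le (by positivity) hlfz0).ne'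
    set W2 := W1 ⊓ LinearMap.ker lf with hW2def
    haveI : FiniteDimensional ℝ W2 := Submodule.finiteDimensional_inf_left W1 (LinearMap.ker lf)
    have hz0nW2 : z0 ∉ W2 := by
      intro h
      have : lf z0 = 0 := h.2
      exact hlfz0pos this
    have hW2lt : W2 < W1 := lt_of_le_of_ne inf_le_left (by
      intro h
      exact hz0nW2 (h ▸ hz0W1))
    have hW2rk : Module.finrank ℝ W2 ≤ n := by
      have h1 := Submodule.finrank_lt_finrank_of_lt hW2lt
      have h2 : Module.finrank ℝ W1 ≤ n + 1 := by
        rw [← hWrk]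
        exact Submodule.finrank_map_le _ _
      omega
    -- approximation
    have happrox : ∀ z ∈ K, ∃ u ∈ (W2 : Set X), ‖z - u‖ ≤ C * δ := by
      intro z hz
      obtain ⟨z', hz'K, hz'eq⟩ := hT hz
      obtain ⟨w, hwW, hww⟩ := hWj z' hz'K
      set zw := T w with hzwdef
      have hzwW1 : zw ∈ W1 := Submodule.mem_map_of_mem hwW
      have h1 : ‖z - zw‖ ≤ 2 * M * δ := by
        rw [← hz'eq, hzwdef, ← map_sub]
        refine le_trans (hTle _) ?_
        rw [← dist_eq_norm]
        nlinarith [hww.le, dist_nonneg (x := z') (y := w)]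
      set t := lf zw / lf z0 with htdef
      have huW2 : zw - t • z0 ∈ W2 := by
        refine Submodule.mem_inf.2 ⟨Submodule.sub_mem _ hzwW1 (Submodule.smul_mem _ _ hz0W1), ?_⟩
        have hcalc : lf (zw - t • z0) = lf zw - t * lf z0 := by
          rw [map_sub, map_smul]; rfl
        refine LinearMap.mem_ker.2 ?_
        rw [hcalc, htdef, div_mul_cancel₀ _ hlfz0pos, sub_self]
      have hfzw : |lf zw| ≤ 2 * M * δ := by
        have : lf zw = lf zw - lf z := by rw [hlfK z hz, sub_zero]
        rw [this, ← map_sub]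
        refine le_trans (hlfb _) ?_
        rw [← norm_neg, neg_sub]
        exact h1
      have ht : |t| ≤ 2 * M * δ / (c / 2) := by
        rw [htdef, abs_div]
        exact div_le_div₀ (by positivity) hfzw (by positivity)
          (le_trans hlfz0 (le_abs_self _))
      refine ⟨zw - t • z0, huW2, ?_⟩
      have hz0B : ‖t • z0‖ ≤ (2 * M * δ / (c / 2)) * B := by
        rw [norm_smul, Real.norm_eq_abs]
        exact mul_le_mul ht hz0norm (norm_nonneg _) (by positivity)
      have hsplit : ‖z - (zw - t • z0)‖ ≤ ‖z - zw‖ + ‖t • z0‖ := by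
        have : z - (zw - t • z0) = (z - zw) + t • z0 := by abel
        rw [this]
        exact norm_add_le _ _
      have harith : 2 * M * δ + (2 * M * δ / (c / 2)) * B ≤ C * δ := by
        rw [hCdef]
        have h1 : 2 * M * δ / (c / 2) = 4 * M * δ / c := by
          field_simp
          ring
        rw [h1]
        have h2 : 4 * M * δ / c * B = (4 * M * B / c) * δ := by
          field_simp
        rw [h2]
        have hpos : 0 ≤ M * δ + 2 * M * B / c * δ := by positivity
        have hring : (3 * M + 6 * M * B / c) * δ =
            2 * M * δ + 4 * M * B / c * δ + (M * δ + 2 * M * B / c * δ) := by ring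
        linarith [hpos, hring.ge, hring.le]
      calc ‖z - (zw - t • z0)‖ ≤ ‖z - zw‖ + ‖t • z0‖ := hsplit
        _ ≤ 2 * M * δ + (2 * M * δ / (c / 2)) * B := add_le_add h1 hz0B
        _ ≤ C * δ := harith
    -- conclude
    have hkol : kolWidth K n ≤ ENNReal.ofReal (C * δ) := by
      refine my_kolWidth_le hX W2 inferInstance hW2rk ?_
      intro z hz
      obtain ⟨u, huW2, hule⟩ := happrox z hz
      refine le_trans (EMetric.infEdist_le_edist_of_mem huW2) ?_
      rw [edist_dist]
      refine ENNReal.ofReal_le_ofReal ?_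
      rw [dist_eq_norm]
      exact hule
    rw [ENNReal.ofReal_mul hCpos.le, hδdef, ENNReal.ofReal_toReal hd1netop] at hkol
    exact hkol
  -- contradiction with lacunarity
  have hratio : ∀ᶠ n in atTop, (ENNReal.ofReal C)⁻¹ ≤ kolWidth K (n + 1) / kolWidth K n := by
    rw [eventually_atTop]
    refine ⟨N, fun n hn => ?_⟩
    have h1 := key n hn
    have hd1ne0 : kolWidth K (n + 1) ≠ 0 := my_width_ne_zero hinf (n + 1)
    have hd1netop : kolWidth K (n + 1) ≠ ⊤ := my_width_ne_top hX hK (n + 1)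
    have hCne0 : ENNReal.ofReal C ≠ 0 := by
      simp [ENNReal.ofReal_eq_zero, not_le, hCpos]
    have h2 : kolWidth K (n + 1) / (ENNReal.ofReal C * kolWidth K (n + 1)) ≤
        kolWidth K (n + 1) / kolWidth K n := ENNReal.div_le_div_left h1 _
    refine le_trans (le_of_eq ?_) h2
    rw [div_eq_mul_inv, ENNReal.mul_inv (Or.inl hCne0) (Or.inl ENNReal.ofReal_ne_top),
      ← mul_assoc, mul_comm (kolWidth K (n + 1)) ((ENNReal.ofReal C)⁻¹), mul_assoc,
      ENNReal.mul_inv_cancel hd1ne0 hd1netop, mul_one]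
  have hliminf : (ENNReal.ofReal C)⁻¹ ≤
      liminf (fun n => kolWidth K (n + 1) / kolWidth K n) atTop :=
    le_liminf_of_le (by isBoundedDefault) hratio
  rw [Lacunary] at hlac
  have hzero : (ENNReal.ofReal C)⁻¹ = 0 := le_antisymm (hlac ▸ hliminf) zero_le
  rw [ENNReal.inv_eq_zero] at hzero
  exact ENNReal.ofReal_ne_top hzero
end
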